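/- arXiv:2512.00930 — 4 statements merged into one kernel-verified Lean document; each statement's English description precedes it below -/
import Mathlib

section
/- Let Ω be a nonempty convex subset of ℝ^L such that no vector in Ω has all entries strictly negative. Then there exists a vector w in the unit simplex of ℝ^L (w ≥ 0 coordinatewise, Σ_ℓ w_ℓ = 1) such that wᵀμ ≥ 0 for all μ ∈ Ω. -/
theorem stmt1 (L : ℕ) (Ω : Set (Fin L → ℝ)) (hne : Ω.Nonempty) (hconv : Convex ℝ Ω)
    (h : ∀ μ ∈ Ω, ∃ ℓ, 0 ≤ μ ℓ) :
    ∃ w : Fin L → ℝ, (∀ ℓ, 0 ≤ w ℓ) ∧ (∑ ℓ, w ℓ) = 1 ∧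
      ∀ μ ∈ Ω, 0 ≤ ∑ ℓ, w ℓ * μ ℓ := by
  obtain ⟨μ0, hμ0⟩ := hne
  obtain ⟨ℓ0, -⟩ := h μ0 hμ0
  set N : Set (Fin L → ℝ) := {μ | ∀ ℓ, μ ℓ < 0} with hN
  have hNpi : N = Set.pi Set.univ (fun _ => Set.Iio (0:ℝ)) := by
    ext x; simp [hN, Set.mem_pi]
  have hNconv : Convex ℝ N := by
    rw [hNpi]; exact convex_pi (fun i _ => convex_Iio 0)
  have hNopen : IsOpen N := by
    rw [hNpi]; exact isOpen_set_pi Set.finite_univ (fun i _ => isOpen_Iio)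
  have hdisj : Disjoint N Ω := by
    rw [Set.disjoint_left]
    rintro a ha haΩ
    obtain ⟨ℓ, hℓ⟩ := h a haΩ
    exact absurd hℓ (not_le.2 (ha ℓ))
  obtain ⟨f, c, hfN, hfΩ⟩ := geometric_hahn_banach_open hNconv hNopen hconv hdisj
  set w : Fin L → ℝ := fun ℓ => f (Pi.single ℓ 1) with hw
  have hsingle : ∀ (ℓ : Fin L) (r : ℝ), f (Pi.single ℓ r) = r * w ℓ := by
    intro ℓ r
    have h1 : Pi.single ℓ r = r • ((Pi.single ℓ 1 : Fin L → ℝ)) := by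
      funext j
      rcases eq_or_ne j ℓ with rfl | hj
      · simp
      · simp [Pi.single_eq_of_ne hj]
    rw [h1, map_smul, smul_eq_mul]
  have key : ∀ μ : Fin L → ℝ, f μ = ∑ ℓ, μ ℓ * w ℓ := by
    intro μ
    conv_lhs => rw [← Finset.univ_sum_single μ]
    rw [map_sum]
    exact Finset.sum_congr rfl (fun ℓ _ => hsingle ℓ (μ ℓ))
  -- const -1 is in N
  have hone : (fun _ : Fin L => (-1:ℝ)) ∈ N := fun ℓ => by norm_num
  have hfone : f (fun _ => (-1:ℝ)) < c := hfN _ hone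
  -- nonnegativity of w
  have hwnn : ∀ ℓ, 0 ≤ w ℓ := by
    intro ℓ
    by_contra hneg
    push_neg at hneg
    set A : ℝ := f (fun _ => (-1:ℝ)) with hA
    set t : ℝ := (c - A) / (-w ℓ) + 1 with ht
    have hc0 : 0 < c - A := by linarith
    have hwpos : 0 < -w ℓ := by linarith
    have ht1 : 0 < t := by positivity
    set v : Fin L → ℝ := (fun _ => (-1:ℝ)) + Pi.single ℓ (-t) with hv
    have hvN : v ∈ N := by
      intro j
      simp only [hv, Pi.add_apply]
      rcases eq_or_ne j ℓ with rfl | hj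
      · rw [Pi.single_eq_same]; linarith
      · rw [Pi.single_eq_of_ne hj]; norm_num
    have hfv : f v = A + (-t) * w ℓ := by
      rw [hv, map_add, hsingle, hA]
    have hlt : f v < c := hfN _ hvN
    have htw : t * (-w ℓ) = (c - A) + (-w ℓ) := by
      rw [ht, add_mul, one_mul, div_mul_cancel₀ _ (ne_of_gt hwpos)]
    have : (-t) * w ℓ = (c - A) + (-w ℓ) := by rw [← htw]; ring
    rw [hfv, this] at hlt
    linarith
  -- c is nonnegative
  have hc : 0 ≤ c := by
    by_contra hcneg
    push_neg at hcneg
    set S : ℝ := ∑ ℓ, w ℓ with hS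
    have hfone' : f (fun _ => (-1:ℝ)) = -S := by
      rw [key]; simp [hS]
    have hSnn : 0 ≤ S := Finset.sum_nonneg (fun ℓ _ => hwnn ℓ)
    rcases eq_or_lt_of_le hSnn with hS0 | hSpos
    · rw [hfone', ← hS0] at hfone
      norm_num at hfone
      linarith
    · have hSne : S ≠ 0 := ne_of_gt hSpos
      set ε : ℝ := -c / (2 * S) with hε
      have hεpos : 0 < ε := div_pos (by linarith) (by linarith)
      have hεN : (ε • fun _ : Fin L => (-1:ℝ)) ∈ N := by
        intro j
        simp only [Pi.smul_apply, smul_eq_mul]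
        nlinarith
      have hlt := hfN _ hεN
      rw [map_smul, smul_eq_mul, hfone'] at hlt
      have heq : ε * -S = c / 2 := by
        rw [hε]; field_simp
      rw [heq] at hlt
      linarith
  -- sum of w is positive
  have hSpos : 0 < ∑ ℓ, w ℓ := by
    rcases eq_or_lt_of_le (Finset.sum_nonneg (fun ℓ (_ : ℓ ∈ Finset.univ) => hwnn ℓ)) with hS0 | h'
    · exfalso
      have hall : ∀ ℓ, w ℓ = 0 := by
        intro ℓ
        exact (Finset.sum_eq_zero_iff_of_nonneg (fun ℓ _ => hwnn ℓ)).1 hS0.symm ℓ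
          (Finset.mem_univ ℓ)
      have hf0 : f (fun _ => (-1:ℝ)) = 0 := by
        rw [key]; simp [hall]
      have hμ0' : f μ0 = 0 := by
        rw [key]; simp [hall]
      have := hfΩ μ0 hμ0
      rw [hμ0'] at this
      linarith
    · exact h'
  set S : ℝ := ∑ ℓ, w ℓ with hS
  refine ⟨fun ℓ => w ℓ / S, fun ℓ => div_nonneg (hwnn ℓ) hSpos.le, ?_, ?_⟩
  · rw [← Finset.sum_div, ← hS, div_self (ne_of_gt hSpos)]
  · intro μ hμ
    have h1 : c ≤ f μ := hfΩ μ hμ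
    have h2 : f μ = ∑ ℓ, μ ℓ * w ℓ := key μ
    have h3 : ∑ ℓ, (w ℓ / S) * μ ℓ = (∑ ℓ, μ ℓ * w ℓ) / S := by
      rw [Finset.sum_div]
      exact Finset.sum_congr rfl (fun ℓ _ => by ring)
    rw [h3, ← h2]
    exact div_nonneg (le_trans hc h1) hSpos.le
end

section
/- Generalized Gordan's Theorem: For a nonempty convex set Ω ⊆ ℝ^L, exactly one of the following holds: (1) there exists μ ∈ Ω with all entries strictly negative; (2) there exists w in the unit simplex of ℝ^L such that wᵀμ ≥ 0 for all μ ∈ Ω. -/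
theorem stmt2 (L : ℕ) (Ω : Set (Fin L → ℝ)) (hne : Ω.Nonempty) (hconv : Convex ℝ Ω) :
    Xor' (∃ μ ∈ Ω, ∀ ℓ, μ ℓ < 0)
      (∃ w : Fin L → ℝ, (∀ ℓ, 0 ≤ w ℓ) ∧ (∑ ℓ, w ℓ) = 1 ∧
        ∀ μ ∈ Ω, 0 ≤ ∑ ℓ, w ℓ * μ ℓ) := by
  -- mutual exclusivity
  have hexcl : ¬ ((∃ μ ∈ Ω, ∀ ℓ, μ ℓ < 0) ∧
      (∃ w : Fin L → ℝ, (∀ ℓ, 0 ≤ w ℓ) ∧ (∑ ℓ, w ℓ) = 1 ∧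
        ∀ μ ∈ Ω, 0 ≤ ∑ ℓ, w ℓ * μ ℓ)) := by
    rintro ⟨⟨μ, hμΩ, hμneg⟩, ⟨w, hw0, hw1, hwμ⟩⟩
    have hj : ∃ j : Fin L, 0 < w j := by
      by_contra h
      push_neg at h
      have : ∑ ℓ, w ℓ = 0 := Finset.sum_eq_zero fun ℓ _ => le_antisymm (h ℓ) (hw0 ℓ)
      simp [this] at hw1
    obtain ⟨j, hj⟩ := hj
    have hlt : ∑ ℓ, w ℓ * μ ℓ < ∑ ℓ : Fin L, (0:ℝ) := by
      apply Finset.sum_lt_sum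
      · intro i _
        exact mul_nonpos_of_nonneg_of_nonpos (hw0 i) (le_of_lt (hμneg i)) |>.trans_eq rfl
      · exact ⟨j, Finset.mem_univ j, mul_neg_of_pos_of_neg hj (hμneg j)⟩
    simp at hlt
    exact absurd (hwμ μ hμΩ) (not_le.2 hlt)
  by_cases h1 : ∃ μ ∈ Ω, ∀ ℓ, μ ℓ < 0
  · exact Or.inl ⟨h1, fun h2 => hexcl ⟨h1, h2⟩⟩
  · refine Or.inr ⟨?_, h1⟩
    -- separation
    set s : Set (Fin L → ℝ) := Set.pi Set.univ (fun _ => Set.Iio (0:ℝ)) with hs_def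
    have hs_conv : Convex ℝ s := convex_pi fun _ _ => convex_Iio 0
    have hs_open : IsOpen s := isOpen_set_pi Set.finite_univ fun _ _ => isOpen_Iio
    have hdisj : Disjoint s Ω := by
      rw [Set.disjoint_left]
      intro x hxs hxΩ
      exact h1 ⟨x, hxΩ, fun ℓ => hxs ℓ (Set.mem_univ ℓ)⟩
    obtain ⟨f, u, hfs, hfΩ⟩ := geometric_hahn_banach_open hs_conv hs_open hconv hdisj
    set w' : Fin L → ℝ := fun ℓ => f (fun j => if ℓ = j then 1 else 0) with hw'_def
    have hf_eq : ∀ x : Fin L → ℝ, f x = ∑ ℓ, x ℓ * w' ℓ := by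
      intro x
      have := LinearMap.pi_apply_eq_sum_univ (f : (Fin L → ℝ) →ₗ[ℝ] ℝ) x
      simpa [smul_eq_mul] using this
    set S : ℝ := ∑ ℓ, w' ℓ with hS_def
    -- w' is nonnegative
    have hw'0 : ∀ j, 0 ≤ w' j := by
      intro j
      by_contra h
      push_neg at h
      set c : ℝ := -w' j with hc
      have hcpos : 0 < c := by simp [hc]; linarith
      set t : ℝ := max 0 ((u + S) / c) with ht
      have htc : u + S ≤ t * c := by
        have : (u + S) / c ≤ t := le_max_right _ _
        calc u + S = ((u + S) / c) * c := by field_simp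
        _ ≤ t * c := by nlinarith [le_max_right 0 ((u+S)/c)]
      set x : Fin L → ℝ := fun ℓ => -1 - (if ℓ = j then t else 0) with hx
      have hxs : x ∈ s := by
        intro ℓ _
        simp only [hx, Set.mem_Iio]
        have : (0:ℝ) ≤ (if ℓ = j then t else 0) := by
          split <;> simp [ht, le_max_left]
        linarith
      have hfx : f x = -S - t * w' j := by
        rw [hf_eq]
        have : ∀ ℓ, x ℓ * w' ℓ = -w' ℓ - (if ℓ = j then t * w' ℓ else 0) := by
          intro ℓ; simp only [hx]; split <;> ring
        rw [Finset.sum_congr rfl fun ℓ _ => this ℓ, Finset.sum_sub_distrib]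
        simp [hS_def]
      have hlt := hfs x hxs
      rw [hfx] at hlt
      have htw : t * c = -(t * w' j) := by rw [hc]; ring
      linarith
    have hS0 : 0 ≤ S := Finset.sum_nonneg fun ℓ _ => hw'0 ℓ
    -- u is nonnegative
    have hu0 : 0 ≤ u := by
      by_contra h
      push_neg at h
      set ε : ℝ := -u / (S + 1) with hε
      have hεpos : 0 < ε := by
        apply div_pos <;> linarith
      have hxs : (fun _ : Fin L => -ε) ∈ s := fun ℓ _ => by
        simp only [Set.mem_Iio]; linarith
      have hfx : f (fun _ => -ε) = -ε * S := by
        rw [hf_eq, hS_def, Finset.mul_sum]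
      have hlt := hfs _ hxs
      rw [hfx] at hlt
      have key : ε * (S + 1) = -u := by rw [hε]; field_simp
      nlinarith
    -- S > 0
    have hSpos : 0 < S := by
      rcases lt_or_eq_of_le hS0 with h | h
      · exact h
      · exfalso
        have hw'z : ∀ j, w' j = 0 := by
          intro j
          have := Finset.sum_eq_zero_iff_of_nonneg (fun ℓ _ => hw'0 ℓ) |>.mp h.symm
          exact this j (Finset.mem_univ j)
        have hfz : ∀ x, f x = 0 := by
          intro x; rw [hf_eq]; simp [hw'z]
        have hu_pos : 0 < u := by
          have := hfs (fun _ => -1) (fun ℓ _ => by simp)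
          rwa [hfz] at this
        obtain ⟨μ, hμ⟩ := hne
        have := hfΩ μ hμ
        rw [hfz] at this
        linarith
    refine ⟨fun ℓ => w' ℓ / S, fun ℓ => div_nonneg (hw'0 ℓ) hS0, ?_, ?_⟩
    · rw [← Finset.sum_div, ← hS_def, div_self (ne_of_gt hSpos)]
    · intro μ hμ
      have h1' := hfΩ μ hμ
      rw [hf_eq] at h1'
      have : 0 ≤ ∑ ℓ, μ ℓ * w' ℓ := le_trans hu0 h1'
      have heq : ∑ ℓ, w' ℓ / S * μ ℓ = (∑ ℓ, μ ℓ * w' ℓ) / S := by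
        rw [Finset.sum_div]
        exact Finset.sum_congr rfl fun ℓ _ => by ring
      rw [heq]
      positivity
end

section
/- Gordan's Theorem: For a matrix M ∈ ℝ^{m×L}, exactly one of the following holds: (1) there exists w ∈ ℝ^L such that every entry of Mw is strictly positive; (2) there exists β ∈ ℝ^m with β ≥ 0, β ≠ 0, and Mᵀβ = 0. -/
open Finset Matrix

/-- Both alternatives cannot hold simultaneously. -/
lemma gordan_not_both (m L : ℕ) (M : Matrix (Fin m) (Fin L) ℝ)
    (h1 : ∃ w : Fin L → ℝ, ∀ i, 0 < M.mulVec w i)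
    (h2 : ∃ β : Fin m → ℝ, (∀ i, 0 ≤ β i) ∧ β ≠ 0 ∧ M.transpose.mulVec β = 0) : False := by
  obtain ⟨w, hw⟩ := h1
  obtain ⟨β, hβ0, hβne, hβM⟩ := h2
  have hdot : dotProduct β (M.mulVec w) = 0 := by
    rw [Matrix.dotProduct_mulVec, ← Matrix.mulVec_transpose, hβM]
    simp [dotProduct]
  obtain ⟨i0, hi0⟩ : ∃ i, β i ≠ 0 := by
    by_contra h
    push_neg at h
    exact hβne (funext fun i => h i)
  have hpos : 0 < dotProduct β (M.mulVec w) := by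
    apply Finset.sum_pos'
    · intro i _
      exact mul_nonneg (hβ0 i) (le_of_lt (hw i))
    · exact ⟨i0, Finset.mem_univ _, mul_pos ((hβ0 i0).lt_of_ne (Ne.symm hi0)) (hw i0)⟩
  rw [hdot] at hpos
  exact lt_irrefl _ hpos

/-- Condition (2) is equivalent to 0 being in the convex hull of the rows. -/
lemma gordan_mem_hull (m L : ℕ) (M : Matrix (Fin m) (Fin L) ℝ) :
    (0 : Fin L → ℝ) ∈ convexHull ℝ (Set.range fun i => M i) ↔
      ∃ β : Fin m → ℝ, (∀ i, 0 ≤ β i) ∧ β ≠ 0 ∧ M.transpose.mulVec β = 0 := by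
  rw [convexHull_range_eq_exists_affineCombination]
  constructor
  · rintro ⟨s, w, hw0, hw1, hcomb⟩
    rw [Finset.affineCombination_eq_linear_combination s _ _ hw1] at hcomb
    refine ⟨fun i => if i ∈ s then w i else 0, fun i => ?_, ?_, ?_⟩
    · by_cases hi : i ∈ s
      · simpa [hi] using hw0 i hi
      · simp [hi]
    · intro h
      have h10 : (1 : ℝ) = 0 := by
        rw [← hw1]
        apply Finset.sum_eq_zero
        intro i hi
        have := congrFun h i
        simpa [hi] using this
      exact one_ne_zero h10
    · funext j
      have hj := congrFun hcomb j
      simp only [Finset.sum_apply, Pi.smul_apply, smul_eq_mul, Pi.zero_apply] at hj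
      simp only [Matrix.mulVec, dotProduct, Matrix.transpose_apply, Pi.zero_apply]
      have hsub : ∑ i, M i j * (if i ∈ s then w i else 0) = ∑ i ∈ s, w i * M i j := by
        rw [← Finset.sum_subset (Finset.subset_univ s) (fun i _ hi => by simp [hi])]
        exact Finset.sum_congr rfl fun i hi => by simp [hi, mul_comm]
      rw [hsub, hj]
  · rintro ⟨β, hβ0, hβne, hβM⟩
    have hc : 0 < ∑ i, β i := by
      apply Finset.sum_pos' (fun i _ => hβ0 i)
      by_contra h
      push_neg at h
      exact hβne (funext fun i => le_antisymm (h i (Finset.mem_univ i)) (hβ0 i))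
    set c := ∑ i, β i with hc_def
    have hsum1 : ∑ i ∈ Finset.univ, β i / c = 1 := by
      rw [← Finset.sum_div, ← hc_def, div_self hc.ne']
    refine ⟨Finset.univ, fun i => β i / c, fun i _ => div_nonneg (hβ0 i) hc.le, hsum1, ?_⟩
    rw [Finset.affineCombination_eq_linear_combination _ _ _ hsum1]
    funext j
    simp only [Finset.sum_apply, Pi.smul_apply, smul_eq_mul, Pi.zero_apply]
    have hj := congrFun hβM j
    simp only [Matrix.mulVec, dotProduct, Matrix.transpose_apply, Pi.zero_apply] at hj
    calc ∑ i, β i / c * M i j = (∑ i, M i j * β i) / c := by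
          rw [Finset.sum_div]; exact Finset.sum_congr rfl fun i _ => by ring
      _ = 0 := by rw [hj, zero_div]

theorem stmt3 (m L : ℕ) (M : Matrix (Fin m) (Fin L) ℝ) :
    Xor' (∃ w : Fin L → ℝ, ∀ i, 0 < M.mulVec w i)
      (∃ β : Fin m → ℝ, (∀ i, 0 ≤ β i) ∧ β ≠ 0 ∧ M.transpose.mulVec β = 0) := by
  by_cases h2 : ∃ β : Fin m → ℝ, (∀ i, 0 ≤ β i) ∧ β ≠ 0 ∧ M.transpose.mulVec β = 0
  · exact Or.inr ⟨h2, fun h1 => gordan_not_both m L M h1 h2⟩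
  · left
    refine ⟨?_, h2⟩
    have h0 : (0 : Fin L → ℝ) ∉ convexHull ℝ (Set.range fun i => M i) := by
      rw [gordan_mem_hull]; exact h2
    have hconv : Convex ℝ (convexHull ℝ (Set.range fun i => M i)) := convex_convexHull _ _
    have hclosed : IsClosed (convexHull ℝ (Set.range fun i => M i)) :=
      ((Set.finite_range _).isCompact_convexHull ℝ).isClosed
    obtain ⟨f, u, hfu, hu0⟩ := geometric_hahn_banach_closed_point hconv hclosed h0
    have hf0 : f 0 = 0 := map_zero f
    refine ⟨fun j => -f (Pi.single j 1), fun i => ?_⟩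
    have hrow : f (M i) < u :=
      hfu _ (subset_convexHull ℝ _ ⟨i, rfl⟩)
    have hu : u < 0 := by rw [hf0] at hu0; exact hu0
    have hdecomp : M i = ∑ j, M i j • (Pi.single j 1 : Fin L → ℝ) := by
      funext j'
      rw [Finset.sum_apply]
      simp [Pi.single_apply, eq_comm, mul_comm]
    have hfval : f (M i) = ∑ j, M i j * f (Pi.single j 1) := by
      conv_lhs => rw [hdecomp]
      rw [map_sum]
      simp only [_root_.map_smul, smul_eq_mul]
    have hexp : M.mulVec (fun j => -f (Pi.single j 1)) i = -f (M i) := by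
      simp only [Matrix.mulVec, dotProduct, hfval, ← Finset.sum_neg_distrib]
      exact Finset.sum_congr rfl fun j _ => by ring
    rw [hexp]
    linarith
end

section
/- For each finite index set I and vectors μ_i ∈ Ω (a convex subset of ℝ^L not containing 0), the set V = {w ∈ ℝ^L : ‖w‖₁ = 1 and wᵀμ_i ≥ 0 for all i ∈ I} is a nonempty compact set; consequently, by the finite intersection property, ⋂_{μ ∈ Ω} {w : ‖w‖₁ = 1, wᵀμ ≥ 0} is nonempty. -/
open Finset

private lemma stmt18_compact (L : ℕ) (I : Finset (Fin L → ℝ)) :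
    IsCompact {w : Fin L → ℝ | (∑ ℓ, |w ℓ|) = 1 ∧ ∀ μ ∈ I, 0 ≤ ∑ ℓ, w ℓ * μ ℓ} := by
  have hcont : Continuous fun w : Fin L → ℝ => ∑ ℓ, |w ℓ| :=
    continuous_finset_sum _ fun ℓ _ => (continuous_apply ℓ).abs
  have hclosed : IsClosed {w : Fin L → ℝ | (∑ ℓ, |w ℓ|) = 1 ∧ ∀ μ ∈ I, 0 ≤ ∑ ℓ, w ℓ * μ ℓ} := by
    have h1 : IsClosed {w : Fin L → ℝ | (∑ ℓ, |w ℓ|) = 1} :=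
      isClosed_eq hcont continuous_const
    have h2 : ∀ μ : Fin L → ℝ, IsClosed {w : Fin L → ℝ | 0 ≤ ∑ ℓ, w ℓ * μ ℓ} := fun μ =>
      isClosed_le continuous_const
        (continuous_finset_sum _ fun ℓ _ => (continuous_apply ℓ).mul continuous_const)
    have : {w : Fin L → ℝ | (∑ ℓ, |w ℓ|) = 1 ∧ ∀ μ ∈ I, 0 ≤ ∑ ℓ, w ℓ * μ ℓ}
        = {w : Fin L → ℝ | (∑ ℓ, |w ℓ|) = 1} ∩ ⋂ μ ∈ I, {w : Fin L → ℝ | 0 ≤ ∑ ℓ, w ℓ * μ ℓ} := by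
      ext w; simp [Set.mem_iInter]
    rw [this]
    exact h1.inter (isClosed_biInter fun μ _ => h2 μ)
  have hbdd : Bornology.IsBounded
      {w : Fin L → ℝ | (∑ ℓ, |w ℓ|) = 1 ∧ ∀ μ ∈ I, 0 ≤ ∑ ℓ, w ℓ * μ ℓ} := by
    refine isBounded_iff_forall_norm_le.2 ⟨1, fun w hw => ?_⟩
    rw [pi_norm_le_iff_of_nonneg zero_le_one]
    intro i
    rw [Real.norm_eq_abs]
    calc |w i| ≤ ∑ ℓ, |w ℓ| := Finset.single_le_sum (f := fun ℓ => |w ℓ|) (fun ℓ _ => abs_nonneg _) (Finset.mem_univ i)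
    _ = 1 := hw.1
  exact Metric.isCompact_of_isClosed_isBounded hclosed hbdd

private lemma stmt18_nonempty (L : ℕ) (Ω : Set (Fin L → ℝ)) (hne : Ω.Nonempty)
    (hconv : Convex ℝ Ω) (h0 : (0 : Fin L → ℝ) ∉ Ω) (I : Finset (Fin L → ℝ)) (hI : ↑I ⊆ Ω) :
    {w : Fin L → ℝ | (∑ ℓ, |w ℓ|) = 1 ∧ ∀ μ ∈ I, 0 ≤ ∑ ℓ, w ℓ * μ ℓ}.Nonempty := by
  classical
  obtain ⟨μ₀, hμ₀⟩ := hne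
  set J : Finset (Fin L → ℝ) := insert μ₀ I with hJ
  have hJΩ : (J : Set (Fin L → ℝ)) ⊆ Ω := by
    intro x hx
    simp only [hJ, coe_insert, Set.mem_insert_iff] at hx
    rcases hx with rfl | hx
    · exact hμ₀
    · exact hI hx
  have hhullΩ : convexHull ℝ (J : Set (Fin L → ℝ)) ⊆ Ω := convexHull_min hJΩ hconv
  have h0hull : (0 : Fin L → ℝ) ∉ convexHull ℝ (J : Set (Fin L → ℝ)) :=
    fun h => h0 (hhullΩ h)
  have hclosed : IsClosed (convexHull ℝ (J : Set (Fin L → ℝ))) :=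
    (J.finite_toSet.isCompact_convexHull ℝ).isClosed
  obtain ⟨f, u, hfu, hf⟩ :=
    geometric_hahn_banach_point_closed (convex_convexHull ℝ _) hclosed h0hull
  have hu : 0 < u := by simpa using hfu
  set w : Fin L → ℝ := fun ℓ => f (fun j => if ℓ = j then 1 else 0) with hw
  have hrep : ∀ v : Fin L → ℝ, f v = ∑ ℓ, v ℓ * w ℓ := by
    intro v
    have := LinearMap.pi_apply_eq_sum_univ (f : (Fin L → ℝ) →ₗ[ℝ] ℝ) v
    simpa [hw, smul_eq_mul] using this
  have hpos : ∀ μ ∈ J, 0 < ∑ ℓ, μ ℓ * w ℓ := by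
    intro μ hμ
    have : u < f μ := hf μ (subset_convexHull ℝ _ (by exact_mod_cast hμ))
    rw [hrep] at this
    linarith
  set s : ℝ := ∑ ℓ, |w ℓ| with hs
  have hs0 : 0 < s := by
    rcases eq_or_lt_of_le (Finset.sum_nonneg (fun ℓ _ => abs_nonneg (w ℓ)) : (0:ℝ) ≤ s) with h | h
    · exfalso
      have hall : ∀ ℓ, w ℓ = 0 := by
        intro ℓ
        have := (Finset.sum_eq_zero_iff_of_nonneg (fun ℓ _ => abs_nonneg (w ℓ))).1 h.symm ℓ
          (Finset.mem_univ ℓ)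
        exact abs_eq_zero.1 this
      have := hpos μ₀ (Finset.mem_insert_self _ _)
      simp [hall] at this
    · exact h
  refine ⟨fun ℓ => w ℓ / s, ?_, ?_⟩
  · simp only [Set.mem_setOf_eq]
    have : ∀ ℓ, |w ℓ / s| = |w ℓ| / s := by
      intro ℓ; rw [abs_div, abs_of_pos hs0]
    simp only [this, ← Finset.sum_div]
    field_simp
    exact hs.symm
  · intro μ hμ
    have h1 : (0:ℝ) < ∑ ℓ, μ ℓ * w ℓ := hpos μ (Finset.mem_insert_of_mem hμ)
    have : ∑ ℓ, (w ℓ / s) * μ ℓ = (∑ ℓ, μ ℓ * w ℓ) / s := by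
      rw [Finset.sum_div]
      apply Finset.sum_congr rfl; intro ℓ _; ring
    rw [this]
    positivity

theorem stmt18 (L : ℕ) (Ω : Set (Fin L → ℝ)) (hne : Ω.Nonempty) (hconv : Convex ℝ Ω)
    (h0 : (0 : Fin L → ℝ) ∉ Ω) :
    (∀ I : Finset (Fin L → ℝ), ↑I ⊆ Ω →
      IsCompact {w : Fin L → ℝ | (∑ ℓ, |w ℓ|) = 1 ∧ ∀ μ ∈ I, 0 ≤ ∑ ℓ, w ℓ * μ ℓ} ∧
      {w : Fin L → ℝ | (∑ ℓ, |w ℓ|) = 1 ∧ ∀ μ ∈ I, 0 ≤ ∑ ℓ, w ℓ * μ ℓ}.Nonempty) ∧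
    (⋂ μ ∈ Ω, {w : Fin L → ℝ | (∑ ℓ, |w ℓ|) = 1 ∧ 0 ≤ ∑ ℓ, w ℓ * μ ℓ}).Nonempty := by
  classical
  refine ⟨fun I hI => ⟨stmt18_compact L I, stmt18_nonempty L Ω hne hconv h0 I hI⟩, ?_⟩
  set S : Set (Fin L → ℝ) := {w | (∑ ℓ, |w ℓ|) = 1} with hS
  have hScompact : IsCompact S := by
    have := stmt18_compact L (∅ : Finset (Fin L → ℝ))
    simpa [hS] using this
  set t : Ω → Set (Fin L → ℝ) := fun μ => {w | 0 ≤ ∑ ℓ, w ℓ * (μ : Fin L → ℝ) ℓ} with ht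
  have htc : ∀ μ : Ω, IsClosed (t μ) := fun μ =>
    isClosed_le continuous_const
      (continuous_finset_sum _ fun ℓ _ => (continuous_apply ℓ).mul continuous_const)
  have key : (S ∩ ⋂ μ : Ω, t μ).Nonempty := by
    apply hScompact.inter_iInter_nonempty t htc
    intro u
    have hsub : ↑(u.image (Subtype.val : Ω → Fin L → ℝ)) ⊆ Ω := by
      intro x hx
      simp only [coe_image, Set.mem_image, mem_coe, Finset.mem_image] at hx
      obtain ⟨⟨y, hy⟩, _, rfl⟩ := hx
      exact hy
    obtain ⟨w, hw1, hw2⟩ := stmt18_nonempty L Ω hne hconv h0 (u.image Subtype.val) hsub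
    refine ⟨w, hw1, ?_⟩
    rw [Set.mem_iInter₂]
    intro μ hμ
    exact hw2 μ (Finset.mem_image_of_mem _ hμ)
  obtain ⟨w, hwS, hwt⟩ := key
  refine ⟨w, ?_⟩
  rw [Set.mem_iInter₂]
  intro μ hμ
  refine ⟨hwS, ?_⟩
  have := Set.mem_iInter.1 hwt ⟨μ, hμ⟩
  exact this
end
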